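/- Let G be a graph, B an efficient zero forcing set of G, and F an efficient set of forces of B. Then Term(F) is also an efficient zero forcing set of G, with efficient set of forces Rev(F). -/

import Mathlib

open SimpleGraph

variable {V : Type*}

/-- One simultaneous round of the color change rule: all currently forceable
vertices become black. -/
def forceStep (G : SimpleGraph V) (S : Set V) : Set V :=
  S ∪ {w | ∃ v ∈ S, G.Adj v w ∧ ∀ u, G.Adj v u → u ∉ S → u = w}

/-- The (cumulative) set of black vertices after `t` simultaneous rounds,
starting from `B`; so `B^{(t)} = propSet G B t \ propSet G B (t-1)`. -/
def propSet (G : SimpleGraph V) (B : Set V) : ℕ → Set V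
  | 0 => B
  | t + 1 => forceStep G (propSet G B t)

/-- `B` is a zero forcing set of `G`. -/
def IsZFSet (G : SimpleGraph V) (B : Set V) : Prop := ∃ t, propSet G B t = Set.univ

/-- The zero forcing number `Z(G)`. -/
noncomputable def zfNum (G : SimpleGraph V) : ℕ :=
  sInf {n | ∃ B : Set V, IsZFSet G B ∧ B.ncard = n}

/-- `B` is a minimum zero forcing set of `G`. -/
def IsMinZFSet (G : SimpleGraph V) (B : Set V) : Prop := IsZFSet G B ∧ B.ncard = zfNum G

/-- The propagation time `pt(G,B)` of a zero forcing set `B`. -/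
noncomputable def ptSet (G : SimpleGraph V) (B : Set V) : ℕ :=
  sInf {t | propSet G B t = Set.univ}

/-- The minimum propagation time `pt(G)`. -/
noncomputable def ptMin (G : SimpleGraph V) : ℕ :=
  sInf (ptSet G '' {B | IsMinZFSet G B})

/-- The maximum propagation time `PT(G)`. -/
noncomputable def ptMax (G : SimpleGraph V) : ℕ :=
  sSup (ptSet G '' {B | IsMinZFSet G B})

/-- `IsChronList G S L` : starting from black set `S`, the list `L` is a valid
chronological list of forces, performed one at a time, ending with all
vertices black. -/
def IsChronList (G : SimpleGraph V) : Set V → List (V × V) → Prop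
  | S, [] => S = Set.univ
  | S, (v, w) :: L =>
      v ∈ S ∧ w ∉ S ∧ G.Adj v w ∧ (∀ u, G.Adj v u → u ∉ S → u = w) ∧
        IsChronList G (insert w S) L

/-- `F` is a set of forces of `B`: the unordered set of forces of some
chronological list of forces of `B`. -/
def IsForceSet (G : SimpleGraph V) (B : Set V) (F : Set (V × V)) : Prop :=
  ∃ L : List (V × V), IsChronList G B L ∧ {p | p ∈ L} = F

/-- The terminus of a set of forces: the vertices performing no force. -/
def termSet (F : Set (V × V)) : Set V := {v | ∀ w, (v, w) ∉ F}

/-- The reverse set of forces. -/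
def revSet (F : Set (V × V)) : Set (V × V) := (fun p : V × V => (p.2, p.1)) '' F

/-- The (cumulative) set of black vertices after `t` rounds when propagating
using only the forces in `F`, starting from `B`;
so `F^{(t)} = fpropSet G B F t \ fpropSet G B F (t-1)`. -/
def fpropSet (G : SimpleGraph V) (B : Set V) (F : Set (V × V)) : ℕ → Set V
  | 0 => B
  | t + 1 => fpropSet G B F t ∪
      {w | ∃ v, (v, w) ∈ F ∧ v ∈ fpropSet G B F t ∧ w ∉ fpropSet G B F t ∧
        ∀ u, G.Adj v u → u ∉ fpropSet G B F t → u = w}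

/-- The propagation time `pt(G,F)` of a set of forces `F` of `B`. -/
noncomputable def ptForces (G : SimpleGraph V) (B : Set V) (F : Set (V × V)) : ℕ :=
  sInf {t | fpropSet G B F t = Set.univ}

/-- `B` is an efficient zero forcing set of `G`. -/
def IsEffZFSet (G : SimpleGraph V) (B : Set V) : Prop :=
  IsMinZFSet G B ∧ ptSet G B = ptMin G

/-- `F` is an efficient set of forces of the minimum zero forcing set `B`. -/
def IsEffForces (G : SimpleGraph V) (B : Set V) (F : Set (V × V)) : Prop :=
  IsMinZFSet G B ∧ IsForceSet G B F ∧ ptForces G B F = ptMin G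
section Aux

variable {G : SimpleGraph V} {B S : Set V} {F : Set (V × V)}

lemma fpropSet_subset_succ (t : ℕ) : fpropSet G B F t ⊆ fpropSet G B F (t + 1) :=
  Set.subset_union_left

lemma fpropSet_mono {s t : ℕ} (h : s ≤ t) : fpropSet G B F s ⊆ fpropSet G B F t := by
  induction t with
  | zero => obtain rfl := Nat.le_zero.mp h; exact subset_rfl
  | succ t ih =>
    rcases Nat.lt_succ_iff_lt_or_eq.mp (Nat.lt_succ_of_le h) with h' | rfl
    · exact (ih (Nat.lt_succ_iff.mp h')).trans (fpropSet_subset_succ t)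
    · exact subset_rfl

lemma propSet_subset_succ (t : ℕ) : propSet G B t ⊆ propSet G B (t + 1) :=
  Set.subset_union_left

lemma fpropSet_subset_propSet (h : ∀ p ∈ F, G.Adj p.1 p.2) :
    ∀ t, fpropSet G B F t ⊆ propSet G B t := by
  intro t
  induction t with
  | zero => exact subset_rfl
  | succ t ih =>
    rintro w (hw | ⟨v, hvF, hv, hwn, hcond⟩)
    · exact (propSet_subset_succ t) (ih hw)
    · exact Or.inr ⟨v, ih hv, h _ hvF, fun u hu hun => hcond u hu fun hm => hun (ih hm)⟩

lemma chron_adj : ∀ {L : List (V × V)} {S : Set V}, IsChronList G S L →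
    ∀ p ∈ L, G.Adj p.1 p.2 := by
  intro L
  induction L with
  | nil => intro S _ p hp; cases hp
  | cons q L ih =>
    obtain ⟨v, w⟩ := q
    intro S h p hp
    obtain ⟨hv, hw, hadj, hcond, hL⟩ := h
    rcases List.mem_cons.mp hp with rfl | hp
    · exact hadj
    · exact ih hL p hp

lemma chron_tgt : ∀ {L : List (V × V)} {S : Set V}, IsChronList G S L →
    ∀ p ∈ L, p.2 ∉ S := by
  intro L
  induction L with
  | nil => intro S _ p hp; cases hp
  | cons q L ih =>
    obtain ⟨v, w⟩ := q
    intro S h p hp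
    obtain ⟨hv, hw, hadj, hcond, hL⟩ := h
    rcases List.mem_cons.mp hp with rfl | hp
    · exact hw
    · exact fun hm => ih hL p hp (Set.mem_insert_of_mem _ hm)

lemma chron_src_inj : ∀ {L : List (V × V)} {S : Set V}, IsChronList G S L →
    ∀ v w1 w2, (v, w1) ∈ L → (v, w2) ∈ L → w1 = w2 := by
  intro L
  induction L with
  | nil => intro S _ v w1 w2 h1; cases h1
  | cons q L ih =>
    obtain ⟨a, b⟩ := q
    intro S h v w1 w2 h1 h2
    obtain ⟨ha, hb, hadj, hcond, hL⟩ := h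
    have key : ∀ w', (a, w') ∈ L → False := by
      intro w' hw'
      have hnot := chron_tgt hL _ hw'
      have : w' = b := hcond w' (chron_adj hL _ hw') fun hm => hnot (Set.mem_insert_of_mem _ hm)
      exact hnot (this ▸ Set.mem_insert _ _)
    rcases List.mem_cons.mp h1 with he1 | h1 <;> rcases List.mem_cons.mp h2 with he2 | h2
    · rw [Prod.mk.injEq] at he1 he2; rw [he1.2, he2.2]
    · rw [Prod.mk.injEq] at he1; exact absurd h2 (fun hm => key w2 (he1.1 ▸ hm))
    · rw [Prod.mk.injEq] at he2; exact absurd h1 (fun hm => key w1 (he2.1 ▸ hm))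
    · exact ih hL v w1 w2 h1 h2

lemma chron_tgt_inj : ∀ {L : List (V × V)} {S : Set V}, IsChronList G S L →
    ∀ v1 v2 w, (v1, w) ∈ L → (v2, w) ∈ L → v1 = v2 := by
  intro L
  induction L with
  | nil => intro S _ v1 v2 w h1; cases h1
  | cons q L ih =>
    obtain ⟨a, b⟩ := q
    intro S h v1 v2 w h1 h2
    obtain ⟨ha, hb, hadj, hcond, hL⟩ := h
    rcases List.mem_cons.mp h1 with he1 | h1 <;> rcases List.mem_cons.mp h2 with he2 | h2
    · rw [Prod.mk.injEq] at he1 he2; rw [he1.1, he2.1]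
    · rw [Prod.mk.injEq] at he1
      exact absurd (chron_tgt hL _ h2) (fun hn => hn (he1.2 ▸ Set.mem_insert _ _))
    · rw [Prod.mk.injEq] at he2
      exact absurd (chron_tgt hL _ h1) (fun hn => hn (he2.2 ▸ Set.mem_insert _ _))
    · exact ih hL v1 v2 w h1 h2

lemma chron_cover : ∀ {L : List (V × V)} {S : Set V}, IsChronList G S L →
    ∀ x, x ∉ S → ∃ z, (z, x) ∈ L := by
  intro L
  induction L with
  | nil => intro S h x hx; exact absurd (h ▸ Set.mem_univ x) hx
  | cons q L ih =>
    obtain ⟨v, w⟩ := q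
    intro S h x hx
    obtain ⟨hv, hw, hadj, hcond, hL⟩ := h
    by_cases hxw : x = w
    · exact ⟨v, hxw ▸ List.mem_cons_self⟩
    · obtain ⟨z, hz⟩ := ih hL x (by simp [Set.mem_insert_iff, hxw, hx])
      exact ⟨z, List.mem_cons_of_mem _ hz⟩

end Aux
section Aux2

variable {G : SimpleGraph V} {B : Set V} {F : Set (V × V)}

lemma chron_fprop : ∀ {L : List (V × V)} {S : Set V} {t : ℕ}, IsChronList G S L →
    (∀ p ∈ L, p ∈ F) → S ⊆ fpropSet G B F t → fpropSet G B F (t + L.length) = Set.univ := by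
  intro L
  induction L with
  | nil =>
    intro S t h _ hsub
    simpa using Set.eq_univ_of_univ_subset (h ▸ hsub)
  | cons q L ih =>
    obtain ⟨v, w⟩ := q
    intro S t h hmem hsub
    obtain ⟨hv, hw, hadj, hcond, hL⟩ := h
    have hstep : insert w S ⊆ fpropSet G B F (t + 1) := by
      intro x hx
      rcases Set.mem_insert_iff.mp hx with rfl | hx
      · by_cases hxS : x ∈ fpropSet G B F t
        · exact fpropSet_subset_succ t hxS
        · exact Or.inr ⟨v, hmem _ (List.mem_cons_self), hsub hv, hxS,
            fun u hu hun => hcond u hu fun hm => hun (hsub hm)⟩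
      · exact fpropSet_subset_succ t (hsub hx)
    have := ih hL (fun p hp => hmem p (List.mem_cons_of_mem _ hp)) hstep
    have harith : t + ((v, w) :: L).length = (t + 1) + L.length := by
      simp [List.length_cons]; omega
    rw [harith]
    exact this

lemma fprop_forced : ∀ {t : ℕ} {z : V}, z ∈ fpropSet G B F t → z ∉ B →
    ∃ r, r < t ∧ z ∉ fpropSet G B F r ∧ z ∈ fpropSet G B F (r + 1) ∧
      ∃ u, (u, z) ∈ F ∧ u ∈ fpropSet G B F r ∧
        ∀ x, G.Adj u x → x ∉ fpropSet G B F r → x = z := by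
  intro t
  induction t with
  | zero => intro z hz hzB; exact absurd hz hzB
  | succ t ih =>
    intro z hz hzB
    rcases hz with hz | ⟨u, huF, hu, hzn, hcond⟩
    · obtain ⟨r, hr, h1, h2, h3⟩ := ih hz hzB
      exact ⟨r, Nat.lt_succ_of_lt hr, h1, h2, h3⟩
    · exact ⟨t, Nat.lt_succ_self t, hzn,
        Or.inr ⟨u, huF, hu, hzn, hcond⟩, u, huF, hu, hcond⟩

lemma target_not_early (htinj : ∀ u v w, (u, w) ∈ F → (v, w) ∈ F → u = v)
    {m : ℕ} {x y : V} (hx : x ∉ fpropSet G B F m) (hxy : (x, y) ∈ F) (hyB : y ∉ B) :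
    y ∉ fpropSet G B F (m + 1) := by
  intro hy
  obtain ⟨r, hr, _, _, u, huF, hu, _⟩ := fprop_forced hy hyB
  obtain rfl := htinj u x y huF hxy
  exact hx (fpropSet_mono (Nat.lt_succ_iff.mp hr) hu)

lemma rev_main (htinj : ∀ u v w, (u, w) ∈ F → (v, w) ∈ F → u = v)
    (htB : ∀ p ∈ F, p.2 ∉ B) {T : ℕ} (hT : fpropSet G B F T = Set.univ) :
    ∀ t, t ≤ T → ∀ v,
      (v ∈ termSet F ∨ ∃ x, (v, x) ∈ F ∧ x ∉ fpropSet G B F (T - t)) →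
      v ∈ fpropSet G (termSet F) (revSet F) t := by
  intro t
  induction t with
  | zero =>
    rintro _ v (hv | ⟨x, hvx, hx⟩)
    · exact hv
    · rw [Nat.sub_zero, hT] at hx
      exact absurd (Set.mem_univ x) hx
  | succ t IH =>
    intro ht v hv
    have htT : t ≤ T := Nat.le_of_succ_le ht
    have hm : T - t = (T - (t + 1)) + 1 := by omega
    set m := T - (t + 1) with hmdef
    rcases hv with hv | ⟨x, hvx, hx⟩
    · exact fpropSet_mono (Nat.zero_le _) (show v ∈ fpropSet G (termSet F) (revSet F) 0 from hv)
    · by_cases hvR : v ∈ fpropSet G (termSet F) (revSet F) t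
      · exact fpropSet_subset_succ t hvR
      by_cases hx1 : x ∈ fpropSet G B F (T - t)
      · rw [hm] at hx1
        obtain ⟨r, hr, hxnot, hxmem, u, huF, hu, hcond⟩ := fprop_forced hx1 (htB _ hvx)
        have hrm : r = m := by
          rcases Nat.lt_or_ge r m with h' | h'
          · exact absurd (fpropSet_mono (by omega) hxmem) hx
          · omega
        subst hrm
        -- show x ∈ R t
        have hxR : x ∈ fpropSet G (termSet F) (revSet F) t := by
          apply IH htT
          by_cases hxterm : x ∈ termSet F
          · exact Or.inl hxterm
          · simp only [termSet, Set.mem_setOf_eq, not_forall, not_not] at hxterm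
            obtain ⟨y, hxy⟩ := hxterm
            refine Or.inr ⟨y, hxy, ?_⟩
            rw [hm]
            exact target_not_early htinj hxnot hxy (htB _ hxy)
        refine Or.inr ⟨x, ⟨(v, x), hvx, rfl⟩, hxR, hvR, ?_⟩
        intro u hadjxu hunotR
        by_contra hne
        apply hunotR
        apply IH htT
        by_cases huterm : u ∈ termSet F
        · exact Or.inl huterm
        · simp only [termSet, Set.mem_setOf_eq, not_forall, not_not] at huterm
          obtain ⟨z, huz⟩ := huterm
          refine Or.inr ⟨z, huz, ?_⟩
          have hzuniv : z ∈ fpropSet G B F T := hT ▸ Set.mem_univ z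
          obtain ⟨r', hr', hznot, hzmem, u', hu'F, hu'mem, hcond'⟩ :=
            fprop_forced hzuniv (htB _ huz)
          have hEq2 := htinj u' u z hu'F huz
          rw [hEq2] at hcond'
          have hxS : x ∈ fpropSet G B F r' := by
            by_contra hxn
            have hxz := hcond' x hadjxu.symm hxn
            have huxF : (u, x) ∈ F := by rw [hxz]; exact huz
            exact hne (htinj u v x huxF hvx)
          have hmr : m < r' := by
            by_contra hle
            exact hx (fpropSet_mono (by omega) hxS)
          rw [hm]
          exact fun hz => hznot (fpropSet_mono (by omega) hz)
      · exact fpropSet_subset_succ t (IH htT v (Or.inr ⟨x, hvx, hx1⟩))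

end Aux2
section Aux3

variable {G : SimpleGraph V}

lemma chron_del_append {v w : V} (hadj : G.Adj w v) (hwv : w ≠ v) :
    ∀ (M : List (V × V)) (S : Set V), IsChronList G S M →
      (∀ p ∈ M, p.1 ≠ v ∧ ¬G.Adj p.1 v ∧ p.2 ≠ v) →
      IsChronList G (S \ {v}) (M ++ [(w, v)]) := by
  intro M
  induction M with
  | nil =>
    intro S hS _
    have : S = Set.univ := hS
    subst this
    refine ⟨⟨Set.mem_univ w, by simpa using hwv⟩, fun h => h.2 rfl, hadj, ?_, ?_⟩
    · intro u _ hun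
      by_contra hne
      exact hun ⟨Set.mem_univ u, by simpa using hne⟩
    · show insert v (Set.univ \ {v}) = Set.univ
      rw [Set.insert_diff_singleton]
      simp
  | cons p M ih =>
    obtain ⟨a, b⟩ := p
    intro S hS hcond
    obtain ⟨ha, hb, hab, hc, hM⟩ := hS
    obtain ⟨hav, hnadj, hbv⟩ := hcond _ (List.mem_cons_self)
    refine ⟨⟨ha, by simpa using hav⟩, fun hm => hb hm.1, hab, ?_, ?_⟩
    · intro u hu hun
      by_cases huv : u = v
      · exact absurd (huv ▸ hu) hnadj
      · exact hc u hu fun hm => hun ⟨hm, by simpa using huv⟩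
    · have hins : insert b (S \ {v}) = insert b S \ {v} := by
        rw [Set.insert_diff_singleton_comm hbv]
      rw [hins]
      exact ih _ hM fun p hp => hcond p (List.mem_cons_of_mem _ hp)

lemma seqrev : ∀ {L : List (V × V)} {S : Set V}, IsChronList G S L →
    IsChronList G {x | ∀ z, (x, z) ∉ L} (L.reverse.map Prod.swap) := by
  intro L
  induction L with
  | nil =>
    intro S _
    show {x : V | ∀ z, (x, z) ∉ ([] : List (V × V))} = Set.univ
    ext x; simp
  | cons p L ih =>
    obtain ⟨v, w⟩ := p
    intro S h
    obtain ⟨hv, hw, hadj, hc, hL⟩ := h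
    have hF1 : ∀ z, (v, z) ∉ L := by
      intro z hz
      have hzS := chron_tgt hL _ hz
      have hzw : z = w := hc z (chron_adj hL _ hz) fun hm => hzS (Set.mem_insert_of_mem _ hm)
      exact hzS (hzw ▸ Set.mem_insert _ _)
    have hC : {x | ∀ z, (x, z) ∉ (v, w) :: L} = {x | ∀ z, (x, z) ∉ L} \ {v} := by
      ext x
      simp only [Set.mem_setOf_eq, Set.mem_diff, Set.mem_singleton_iff, List.mem_cons]
      constructor
      · intro hx
        refine ⟨fun z hz => hx z (Or.inr hz), ?_⟩
        rintro rfl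
        exact hx w (Or.inl rfl)
      · rintro ⟨h1, h2⟩ z (heq | hz)
        · exact h2 (congrArg Prod.fst heq)
        · exact h1 z hz
    have hcond : ∀ p ∈ L.reverse.map Prod.swap, p.1 ≠ v ∧ ¬G.Adj p.1 v ∧ p.2 ≠ v := by
      intro p hp
      simp only [List.mem_map, List.mem_reverse] at hp
      obtain ⟨⟨x, y⟩, hxy, rfl⟩ := hp
      have hyS := chron_tgt hL _ hxy
      refine ⟨?_, ?_, ?_⟩
      · intro h
        have hy : y = v := h
        exact hyS (show (x, y).2 ∈ insert w S from hy ▸ Set.mem_insert_of_mem _ hv)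
      · intro hadj'
        have hyw : y = w := hc y hadj'.symm fun hm => hyS (Set.mem_insert_of_mem _ hm)
        exact hyS (hyw ▸ Set.mem_insert _ _)
      · intro h
        have hx : x = v := h
        exact hF1 y (hx ▸ hxy)
    have hres := chron_del_append hadj.symm (fun h => hw (h ▸ hv)) _ _ (ih hL) hcond
    rw [hC]
    simpa [List.reverse_cons, List.map_append] using hres

end Aux3
/-- If `B` is an efficient zero forcing set of `G` and `F` an efficient set of
forces of `B`, then `Term(F)` is an efficient zero forcing set of `G` with
efficient set of forces `Rev(F)`. -/
theorem term_eff_rev_eff {V : Type*} [Finite V] (G : SimpleGraph V) (B : Set V)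
    (F : Set (V × V)) (hB : IsEffZFSet G B) (hF : IsEffForces G B F) :
    IsEffZFSet G (termSet F) ∧ IsEffForces G (termSet F) (revSet F) := by
  obtain ⟨hBmin, hBpt⟩ := hB
  obtain ⟨_, ⟨L, hL, hLF⟩, hFpt⟩ := hF
  have hmemF : ∀ p : V × V, p ∈ F ↔ p ∈ L := fun p => by
    rw [← hLF]; exact Iff.rfl
  have hadjF : ∀ p ∈ F, G.Adj p.1 p.2 := fun p hp => chron_adj hL p ((hmemF p).mp hp)
  have htgtB : ∀ p ∈ F, p.2 ∉ B := fun p hp => chron_tgt hL p ((hmemF p).mp hp)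
  have htinj : ∀ u v w : V, (u, w) ∈ F → (v, w) ∈ F → u = v := fun u v w h1 h2 =>
    chron_tgt_inj hL u v w ((hmemF _).mp h1) ((hmemF _).mp h2)
  have hsinj : ∀ (v w1 w2 : V), (v, w1) ∈ F → (v, w2) ∈ F → w1 = w2 := fun v w1 w2 h1 h2 =>
    chron_src_inj hL v w1 w2 ((hmemF _).mp h1) ((hmemF _).mp h2)
  -- forward termination
  have hterm1 : fpropSet G B F (0 + L.length) = Set.univ :=
    chron_fprop hL (fun p hp => (hmemF p).mpr hp) subset_rfl
  set T := ptForces G B F with hTdef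
  have hTne : {t | fpropSet G B F t = Set.univ}.Nonempty := ⟨_, hterm1⟩
  have hT : fpropSet G B F T = Set.univ := Nat.sInf_mem hTne
  -- reverse termination
  have hrev : fpropSet G (termSet F) (revSet F) T = Set.univ := by
    apply Set.eq_univ_of_forall
    intro v
    apply rev_main htinj htgtB hT T le_rfl
    by_cases hv : v ∈ termSet F
    · exact Or.inl hv
    · simp only [termSet, Set.mem_setOf_eq, not_forall, not_not] at hv
      obtain ⟨x, hx⟩ := hv
      refine Or.inr ⟨x, hx, ?_⟩
      rw [Nat.sub_self]
      exact htgtB _ hx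
  have hrevadj : ∀ p ∈ revSet F, G.Adj p.1 p.2 := by
    rintro p ⟨q, hq, rfl⟩
    exact (hadjF q hq).symm
  have hrevne : {t | fpropSet G (termSet F) (revSet F) t = Set.univ}.Nonempty := ⟨T, hrev⟩
  have hptF_le : ptForces G (termSet F) (revSet F) ≤ T := Nat.sInf_le hrev
  set T2 := ptForces G (termSet F) (revSet F) with hT2def
  have hT2 : fpropSet G (termSet F) (revSet F) T2 = Set.univ := Nat.sInf_mem hrevne
  have hprop2 : propSet G (termSet F) T2 = Set.univ :=
    Set.eq_univ_of_univ_subset (hT2 ▸ fpropSet_subset_propSet hrevadj T2)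
  have hZF : IsZFSet G (termSet F) := ⟨T2, hprop2⟩
  have hptSet_le : ptSet G (termSet F) ≤ T2 :=
    Nat.sInf_le (show T2 ∈ {t | propSet G (termSet F) t = Set.univ} from hprop2)
  -- cardinality
  have hters : termSet F = (Prod.fst '' F)ᶜ := by
    ext v
    constructor
    · intro h hmem
      obtain ⟨p, hp, hpv⟩ := hmem
      have hp' : (p.1, p.2) ∈ F := by simpa using hp
      exact h p.2 (hpv ▸ hp')
    · intro h w hw
      exact h ⟨(v, w), hw, rfl⟩
  have hBs : B = (Prod.snd '' F)ᶜ := by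
    ext b
    constructor
    · intro hb hmem
      obtain ⟨p, hp, hpb⟩ := hmem
      exact htgtB _ hp (hpb ▸ hb)
    · intro h
      by_contra hbB
      obtain ⟨z, hz⟩ := chron_cover hL b hbB
      exact h ⟨(z, b), (hmemF _).mpr hz, rfl⟩
  have hFfin : F.Finite := Set.toFinite F
  have hfst : (Prod.fst '' F).ncard = F.ncard := by
    apply Set.ncard_image_of_injOn
    intro p hp q hq h
    have hp' : (p.1, p.2) ∈ F := by simpa using hp
    have hq' : (p.1, q.2) ∈ F := by rw [h]; simpa using hq
    have := hsinj p.1 p.2 q.2 hp' hq'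
    exact Prod.ext h this
  have hsnd : (Prod.snd '' F).ncard = F.ncard := by
    apply Set.ncard_image_of_injOn
    intro p hp q hq h
    have hp' : (p.1, p.2) ∈ F := by simpa using hp
    have hq' : (q.1, p.2) ∈ F := by rw [h]; simpa using hq
    have := htinj p.1 q.1 p.2 hp' hq'
    exact Prod.ext this h
  have c1 : (Prod.fst '' F).ncard + (termSet F).ncard = Nat.card V := by
    rw [hters]; exact Set.ncard_add_ncard_compl _
  have c2 : (Prod.snd '' F).ncard + B.ncard = Nat.card V := by
    rw [hBs]; exact Set.ncard_add_ncard_compl _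
  have hcard : (termSet F).ncard = B.ncard := by omega
  have hmin : IsMinZFSet G (termSet F) := ⟨hZF, hcard.trans hBmin.2⟩
  have h1 : ptMin G ≤ ptSet G (termSet F) :=
    Nat.sInf_le ⟨termSet F, hmin, rfl⟩
  have hTpt : T = ptMin G := hFpt
  have hptSet_eq : ptSet G (termSet F) = ptMin G := by omega
  have hptF_eq : T2 = ptMin G := by
    have h2 : ptMin G ≤ T2 := le_trans h1 hptSet_le
    omega
  -- force set
  have hforce : IsForceSet G (termSet F) (revSet F) := by
    refine ⟨L.reverse.map Prod.swap, ?_, ?_⟩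
    · have hts : termSet F = {x | ∀ z, (x, z) ∉ L} := by
        ext x
        simp only [termSet, Set.mem_setOf_eq]
        exact forall_congr' fun z => not_congr (hmemF _)
      rw [hts]
      exact seqrev hL
    · ext p
      simp only [Set.mem_setOf_eq, List.mem_map, List.mem_reverse, revSet, Set.mem_image]
      constructor
      · rintro ⟨q, hq, rfl⟩
        exact ⟨q, (hmemF _).mpr hq, by simp [Prod.swap]⟩
      · rintro ⟨q, hq, rfl⟩
        exact ⟨q, (hmemF _).mp hq, by simp [Prod.swap]⟩
  exact ⟨⟨hmin, hptSet_eq⟩, hmin, hforce, hptF_eq⟩
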